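/- For every odd integer k ≥ 3, there exists a constant c > 0 (depending only on k) such that for every sufficiently large n there exist a set P of n points in ℝ³ and positive distances δ₁, …, δ_k for which P spans at least c · n^{(k+1)/2} k-chains. That is, C⁽³⁾_k(n) = Ω(n^{(k+1)/2}). -/

import Mathlib

/-- The number of `k`-chains spanned by a finite point set `P` in `ℝ^d` with respect to a
sequence of distances `δ : Fin k → ℝ`: tuples `(p 0, …, p k)` of pairwise distinct points of
`P` with `dist (p j) (p (j+1)) = δ j` for all `j`. -/
noncomputable def chainCount (d k : ℕ) (P : Finset (EuclideanSpace ℝ (Fin d)))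
    (δ : Fin k → ℝ) : ℕ :=
  Set.ncard {p : Fin (k + 1) → EuclideanSpace ℝ (Fin d) |
    (∀ i, p i ∈ P) ∧ Function.Injective p ∧
    ∀ j : Fin k, dist (p j.castSucc) (p j.succ) = δ j}

/-- `maxChains d k n` is the maximum number of `k`-chains spanned by a set of `n` points in
`ℝ^d`, over all sequences of positive distances. -/
noncomputable def maxChains (d k n : ℕ) : ℕ :=
  sSup {m | ∃ (P : Finset (EuclideanSpace ℝ (Fin d))) (δ : Fin k → ℝ),
    P.card = n ∧ (∀ j, 0 < δ j) ∧ m = chainCount d k P δ}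


noncomputable def pt3 (x y z : ℝ) : EuclideanSpace ℝ (Fin 3) :=
  (WithLp.equiv 2 (Fin 3 → ℝ)).symm ![x, y, z]

@[simp] lemma pt3_apply_zero (x y z : ℝ) : pt3 x y z 0 = x := rfl
@[simp] lemma pt3_apply_one (x y z : ℝ) : pt3 x y z 1 = y := rfl
@[simp] lemma pt3_apply_two (x y z : ℝ) : pt3 x y z 2 = z := rfl

lemma dist_pt3 (x y z x' y' z' : ℝ) :
    dist (pt3 x y z) (pt3 x' y' z') =
      Real.sqrt ((x - x')^2 + (y - y')^2 + (z - z')^2) := by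
  rw [EuclideanSpace.dist_eq, Fin.sum_univ_three]
  simp [Real.dist_eq, sq_abs]

/-- x-coordinate of the `i`-th circle point (circle with `t` points). -/
noncomputable def xc (t i : ℕ) : ℝ := (i + 1) / (t + 1)

noncomputable def yc (t i : ℕ) : ℝ := Real.sqrt (1 - xc t i ^ 2)

lemma xc_pos (t i : ℕ) : 0 < xc t i := by
  unfold xc; positivity

lemma xc_inj (t : ℕ) {i i' : ℕ} (h : xc t i = xc t i') : i = i' := by
  unfold xc at h
  have ht : ((t : ℝ) + 1) ≠ 0 := by positivity
  field_simp at h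
  have h' : i + 1 = i' + 1 := by exact_mod_cast h
  omega

lemma xc_le_one (t : ℕ) {i : ℕ} (h : i < t) : xc t i ≤ 1 := by
  unfold xc
  rw [div_le_one (by positivity)]
  have : (i : ℝ) ≤ t := by exact_mod_cast h.le
  linarith

lemma x2y2 (t : ℕ) {i : ℕ} (h : i < t) : xc t i ^ 2 + yc t i ^ 2 = 1 := by
  have h0 : (0:ℝ) ≤ xc t i := (xc_pos t i).le
  have h1 : xc t i ^ 2 ≤ 1 := by
    have := xc_le_one t h
    nlinarith
  unfold yc
  rw [Real.sq_sqrt (by linarith)]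
  ring

/-- circle point -/
noncomputable def cpt (t j i : ℕ) : EuclideanSpace ℝ (Fin 3) :=
  pt3 (xc t i) (yc t i) (2 * (j:ℝ) + 1)

/-- anchor point -/
noncomputable def apt (j : ℕ) : EuclideanSpace ℝ (Fin 3) :=
  pt3 0 0 (2 * (j:ℝ) + 2)

/-- filler point -/
noncomputable def fpt (i : ℕ) : EuclideanSpace ℝ (Fin 3) :=
  pt3 0 0 (-((i:ℝ) + 1))

lemma dist_cpt_apt (t : ℕ) {i : ℕ} (h : i < t) (j : ℕ) :
    dist (cpt t j i) (apt j) = Real.sqrt 2 := by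
  rw [cpt, apt, dist_pt3]
  have := x2y2 t h
  congr 1
  ring_nf
  nlinarith [x2y2 t h]

lemma dist_apt_cpt (t : ℕ) {i : ℕ} (h : i < t) (j : ℕ) :
    dist (apt j) (cpt t (j+1) i) = Real.sqrt 2 := by
  rw [cpt, apt, dist_pt3]
  congr 1
  push_cast
  nlinarith [x2y2 t h]

/-- The chain point at position `l` (0-based): circle point for even `l`, anchor for odd. -/
noncomputable def chainPt (t : ℕ) (F : ℕ → ℕ) (l : ℕ) : EuclideanSpace ℝ (Fin 3) :=
  if l % 2 = 0 then cpt t (l / 2) (F (l / 2)) else apt (l / 2)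

lemma chainPt_z (t : ℕ) (F : ℕ → ℕ) (l : ℕ) : chainPt t F l 2 = (l : ℝ) + 1 := by
  unfold chainPt
  split_ifs with h
  · have hn : 2 * (l / 2) + 1 = l + 1 := by omega
    simp only [cpt, pt3_apply_two]
    exact_mod_cast congrArg (Nat.cast : ℕ → ℝ) hn
  · have hn : 2 * (l / 2) + 2 = l + 1 := by omega
    simp only [apt, pt3_apply_two]
    exact_mod_cast congrArg (Nat.cast : ℕ → ℝ) hn

lemma dist_chainPt (t : ℕ) (F : ℕ → ℕ) (hF : ∀ a, F a < t) (l : ℕ) :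
    dist (chainPt t F l) (chainPt t F (l + 1)) = Real.sqrt 2 := by
  rcases Nat.even_or_odd l with he | ho
  · have h0 : l % 2 = 0 := Nat.even_iff.mp he
    have h1 : (l + 1) % 2 ≠ 0 := by omega
    have h2 : (l + 1) / 2 = l / 2 := by omega
    rw [chainPt, chainPt, if_pos h0, if_neg h1, h2]
    exact dist_cpt_apt t (hF _) _
  · have h0 : l % 2 ≠ 0 := by have := Nat.odd_iff.mp ho; omega
    have h1 : (l + 1) % 2 = 0 := by omega
    have h2 : (l + 1) / 2 = l / 2 + 1 := by omega
    rw [chainPt, chainPt, if_neg h0, if_pos h1, h2]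
    exact dist_apt_cpt t (hF _) _

noncomputable local instance : DecidableEq (EuclideanSpace ℝ (Fin 3)) :=
  Classical.decEq _

noncomputable def PA (m : ℕ) : Finset (EuclideanSpace ℝ (Fin 3)) :=
  (Finset.range m).image apt

noncomputable def PC (m t : ℕ) : Finset (EuclideanSpace ℝ (Fin 3)) :=
  ((Finset.range m) ×ˢ (Finset.range t)).image (fun q => cpt t q.1 q.2)

noncomputable def PF (s : ℕ) : Finset (EuclideanSpace ℝ (Fin 3)) :=
  (Finset.range s).image fpt

lemma apt_inj : Function.Injective apt := by
  intro j j' h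
  have h2 : apt j 2 = apt j' 2 := by rw [h]
  simp only [apt, pt3_apply_two] at h2
  have : (j : ℝ) = j' := by linarith
  exact_mod_cast this

lemma fpt_inj : Function.Injective fpt := by
  intro j j' h
  have h2 : fpt j 2 = fpt j' 2 := by rw [h]
  simp only [fpt, pt3_apply_two] at h2
  have : (j : ℝ) = j' := by linarith
  exact_mod_cast this

lemma cpt_inj (t : ℕ) {j i j' i' : ℕ} (h : cpt t j i = cpt t j' i') :
    j = j' ∧ i = i' := by
  have h0 : cpt t j i 0 = cpt t j' i' 0 := by rw [h]
  have h2 : cpt t j i 2 = cpt t j' i' 2 := by rw [h]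
  simp only [cpt, pt3_apply_zero, pt3_apply_two] at h0 h2
  constructor
  · have : (j : ℝ) = j' := by linarith
    exact_mod_cast this
  · exact xc_inj t h0

lemma card_PA (m : ℕ) : (PA m).card = m := by
  rw [PA, Finset.card_image_of_injective _ apt_inj, Finset.card_range]

lemma card_PF (s : ℕ) : (PF s).card = s := by
  rw [PF, Finset.card_image_of_injective _ fpt_inj, Finset.card_range]

lemma card_PC (m t : ℕ) : (PC m t).card = m * t := by
  rw [PC, Finset.card_image_of_injOn, Finset.card_product, Finset.card_range,
    Finset.card_range]
  intro q _ q' _ h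
  obtain ⟨h1, h2⟩ := cpt_inj t h
  exact Prod.ext h1 h2

noncomputable def Pset (m t s : ℕ) : Finset (EuclideanSpace ℝ (Fin 3)) :=
  (PA m ∪ PC m t) ∪ PF s

lemma card_Pset (m t s : ℕ) : (Pset m t s).card = m + m * t + s := by
  have d1 : Disjoint (PA m) (PC m t) := by
    rw [Finset.disjoint_left]
    rintro a ha hc
    simp only [PA, PC, Finset.mem_image, Finset.mem_range, Finset.mem_product] at ha hc
    obtain ⟨j, _, rfl⟩ := ha
    obtain ⟨q, _, hq⟩ := hc
    have : apt j 0 = cpt t q.1 q.2 0 := by rw [hq]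
    simp only [apt, cpt, pt3_apply_zero] at this
    exact absurd this.symm (ne_of_gt (xc_pos t q.2))
  have d2 : Disjoint (PA m ∪ PC m t) (PF s) := by
    rw [Finset.disjoint_left]
    rintro a ha hf
    simp only [PF, Finset.mem_image, Finset.mem_range] at hf
    obtain ⟨i, _, hi⟩ := hf
    rw [Finset.mem_union] at ha
    have hz : (0:ℝ) < a 2 := by
      rcases ha with ha | ha
      · simp only [PA, Finset.mem_image, Finset.mem_range] at ha
        obtain ⟨j, _, rfl⟩ := ha
        simp only [apt, pt3_apply_two]
        positivity
      · simp only [PC, Finset.mem_image] at ha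
        obtain ⟨q, _, rfl⟩ := ha
        simp only [cpt, pt3_apply_two]
        positivity
    rw [← hi] at hz
    simp only [fpt, pt3_apply_two] at hz
    have : (0:ℝ) ≤ i := Nat.cast_nonneg i
    linarith
  rw [Pset, Finset.card_union_of_disjoint d2, Finset.card_union_of_disjoint d1,
    card_PA, card_PC, card_PF]

lemma apt_mem_Pset {m : ℕ} (t s : ℕ) {j : ℕ} (h : j < m) : apt j ∈ Pset m t s := by
  simp only [Pset, Finset.mem_union, PA, Finset.mem_image, Finset.mem_range]
  exact Or.inl (Or.inl ⟨j, h, rfl⟩)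

lemma cpt_mem_Pset {m t : ℕ} (s : ℕ) {j i : ℕ} (hj : j < m) (hi : i < t) :
    cpt t j i ∈ Pset m t s := by
  simp only [Pset, Finset.mem_union, PC, Finset.mem_image, Finset.mem_product,
    Finset.mem_range]
  exact Or.inl (Or.inr ⟨(j, i), ⟨hj, hi⟩, rfl⟩)

/-- Extend `f : Fin m → Fin t` to `ℕ → ℕ`. -/
def Fn (m t : ℕ) (f : Fin m → Fin t) : ℕ → ℕ :=
  fun j => if h : j < m then (f ⟨j, h⟩ : ℕ) else 0

lemma Fn_lt {m t : ℕ} (ht : 0 < t) (f : Fin m → Fin t) (a : ℕ) : Fn m t f a < t := by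
  unfold Fn
  split_ifs with h
  · exact (f ⟨a, h⟩).isLt
  · exact ht

lemma chain_count_lower (m t s k : ℕ) (hm : 0 < m) (ht : 0 < t) (hk : k + 1 = 2 * m) :
    t ^ m ≤ chainCount 3 k (Pset m t s) (fun _ => Real.sqrt 2) := by
  classical
  set S : Set (Fin (k + 1) → EuclideanSpace ℝ (Fin 3)) :=
    {p : Fin (k + 1) → EuclideanSpace ℝ (Fin 3) |
      (∀ i, p i ∈ Pset m t s) ∧ Function.Injective p ∧
      ∀ j : Fin k, dist (p j.castSucc) (p j.succ) = Real.sqrt 2} with hS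
  set Φ : (Fin m → Fin t) → (Fin (k + 1) → EuclideanSpace ℝ (Fin 3)) :=
    fun f l => chainPt t (Fn m t f) (l : ℕ) with hΦ
  have hmem : ∀ f, Φ f ∈ S := by
    intro f
    refine ⟨?_, ?_, ?_⟩
    · intro l
      show chainPt t (Fn m t f) (l : ℕ) ∈ Pset m t s
      have hl : (l : ℕ) < 2 * m := hk ▸ l.isLt
      unfold chainPt
      split_ifs with h
      · exact cpt_mem_Pset s (by omega) (Fn_lt ht f _)
      · exact apt_mem_Pset t s (by omega)
    · intro l1 l2 h
      have h2 : chainPt t (Fn m t f) (l1 : ℕ) 2 = chainPt t (Fn m t f) (l2 : ℕ) 2 :=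
        congrArg (fun x => x 2) h
      rw [chainPt_z, chainPt_z] at h2
      have : (l1 : ℕ) = (l2 : ℕ) := by exact_mod_cast (by linarith : ((l1:ℕ):ℝ) = (l2:ℕ))
      exact Fin.ext this
    · intro j
      show dist (chainPt t (Fn m t f) (j.castSucc : ℕ)) (chainPt t (Fn m t f) (j.succ : ℕ))
        = Real.sqrt 2
      rw [Fin.coe_castSucc, Fin.val_succ]
      exact dist_chainPt t _ (Fn_lt ht f) _
  have hinj : Function.Injective Φ := by
    intro f g h
    funext j
    have h2j : 2 * (j : ℕ) < k + 1 := by omega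
    have := congrFun h ⟨2 * (j : ℕ), h2j⟩
    have hmod : (2 * (j:ℕ)) % 2 = 0 := by omega
    have hdiv : 2 * (j : ℕ) / 2 = (j : ℕ) := by omega
    simp only [hΦ, chainPt, hmod, hdiv, if_pos] at this
    have := (cpt_inj t this).2
    unfold Fn at this
    rw [dif_pos j.isLt, dif_pos j.isLt] at this
    simpa using Fin.ext (by simpa using this)
  have hsub : Set.range Φ ⊆ S := Set.range_subset_iff.mpr hmem
  have hSsub : S ⊆ Set.pi Set.univ (fun _ => (Pset m t s : Set (EuclideanSpace ℝ (Fin 3)))) := by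
    intro p hp
    rw [Set.mem_pi]
    intro i _
    exact hp.1 i
  have hSfin : S.Finite :=
    (Set.Finite.pi fun _ => (Pset m t s).finite_toSet).subset hSsub
  have h1 : (Set.range Φ).ncard ≤ S.ncard := Set.ncard_le_ncard hsub hSfin
  have h2 : (Set.range Φ).ncard = t ^ m := by
    rw [← Set.image_univ, Set.ncard_image_of_injective _ hinj, Set.ncard_univ]
    simp [Nat.card_eq_fintype_card]
  rw [h2] at h1
  exact h1

theorem chains_lower_R3_odd (k : ℕ) (hk : 3 ≤ k) (hodd : Odd k) :
    ∃ c : ℝ, 0 < c ∧ ∃ N : ℕ, ∀ n : ℕ, N ≤ n →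
      ∃ (P : Finset (EuclideanSpace ℝ (Fin 3))) (δ : Fin k → ℝ),
        P.card = n ∧ (∀ j, 0 < δ j) ∧
        c * (n : ℝ) ^ ((k + 1) / 2) ≤ (chainCount 3 k P δ : ℝ) := by
  obtain ⟨a, ha⟩ := hodd
  set m := (k + 1) / 2 with hm
  have hm2 : 2 ≤ m := by omega
  have hk2 : k + 1 = 2 * m := by omega
  have hmR : (0:ℝ) < (m:ℝ) := by exact_mod_cast (by omega : 0 < m)
  refine ⟨(1 / (2 * (m:ℝ))) ^ m, pow_pos (div_pos one_pos (by linarith)) m, 4 * m, ?_⟩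
  intro n hn
  set t := (n - m) / m with htdef
  set s := (n - m) % m with hsdef
  have hq : m * t + s = n - m := Nat.div_add_mod (n - m) m
  have hst : s < m := Nat.mod_lt _ (by omega)
  have ht : 0 < t := Nat.div_pos (by omega) (by omega)
  have hcard : m + m * t + s = n := by omega
  refine ⟨Pset m t s, fun _ => Real.sqrt 2, ?_, ?_, ?_⟩
  · rw [card_Pset]; exact hcard
  · intro j; exact Real.sqrt_pos.mpr two_pos
  · have hcount := chain_count_lower m t s k (by omega) ht hk2
    have h2mt : n ≤ 2 * (m * t) := by omega
    have h2mtR : (n : ℝ) ≤ 2 * m * t := by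
      have : ((n:ℕ) : ℝ) ≤ ((2 * (m * t) : ℕ) : ℝ) := Nat.cast_le.mpr h2mt
      push_cast at this
      linarith
    have hcountR : ((t : ℝ)) ^ m ≤ (chainCount 3 k (Pset m t s) (fun _ => Real.sqrt 2) : ℝ) := by
      have : ((t ^ m : ℕ) : ℝ) ≤ ((chainCount 3 k (Pset m t s) (fun _ => Real.sqrt 2) : ℕ) : ℝ) := Nat.cast_le.mpr hcount
      push_cast at this
      linarith
    have hle : (1 / (2 * (m:ℝ))) ^ m * (n:ℝ) ^ m ≤ ((t:ℝ)) ^ m := by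
      rw [← mul_pow]
      apply pow_le_pow_left₀ (by positivity)
      rw [one_div, inv_mul_eq_div, div_le_iff₀ (by linarith)]
      linarith
    linarith
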